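/- Let n ≥ 1 be an integer, t > 0, a ≥ 1, and let Q ⊆ ℂ^{2n} be compact. Then there exists a constant C > 0 such that for all ε ∈ [a^{-1}, a], all ξ ∈ ℝ and all (z,w) ∈ Q: ∫_ℝ |e^{2εη} W_t^+(z,w,ξ+iη)| dη ≤ C. -/

import Mathlib

open MeasureTheory Complex Filter Topology

noncomputable section

/-- The weight function with complex parameter `μ` (for `Re μ ≠ 0`):
`W_t^μ(x+iy, u+iv) = 4^n exp(μ(u·y - v·x)) (4π)^{-n} (μ/sinh(2tμ))^n
  exp(-μ·coth(2tμ)·(|y|²+|v|²))`. -/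
def WtC (n : ℕ) (t : ℝ) (mu : ℂ) (z w : Fin n → ℂ) : ℂ :=
  4 ^ n *
    Complex.exp (mu * ((((∑ j, (w j).re * (z j).im) - ∑ j, (w j).im * (z j).re : ℝ)) : ℂ)) *
    (((4 * Real.pi) ^ n)⁻¹ : ℝ) * (mu / Complex.sinh (2 * t * mu)) ^ n *
    Complex.exp (-(mu * (Complex.cosh (2 * t * mu) / Complex.sinh (2 * t * mu))) *
      (((∑ j, (z j).im ^ 2) + ∑ j, (w j).im ^ 2 : ℝ) : ℂ))

/-- The partial weight function `W_t^+`, defined with the choice `λ = 1 > 0`: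
`W_t^+(z,w,ζ) = (2π)^{-1} ∫_ℝ exp(2t(λ+is/2)²) exp(-2η(λ+is/2)) W_t^{λ+is/2}(z,w) ds`,
with `η = Im ζ` (the value is independent of the choice of `λ > 0`). -/
def Wplus (n : ℕ) (t : ℝ) (z w : Fin n → ℂ) (ζ : ℂ) : ℂ :=
  ((2 * Real.pi)⁻¹ : ℝ) *
    ∫ s : ℝ,
      Complex.exp (2 * t * ((1 : ℂ) + Complex.I * s / 2) ^ 2) *
        Complex.exp (-2 * (ζ.im : ℂ) * ((1 : ℂ) + Complex.I * s / 2)) *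
        WtC n t ((1 : ℂ) + Complex.I * s / 2) z w


lemma sinh_norm_lower (x y : ℝ) : |Real.sinh x| ≤ ‖Complex.sinh (x + y*Complex.I)‖ := by
  have hre : (Complex.sinh (x + y*Complex.I)).re = Real.sinh x * Real.cos y := by
    simp [Complex.sinh_add, Complex.sinh_mul_I, Complex.cosh_mul_I, ← Complex.ofReal_sinh,
      ← Complex.ofReal_cosh, ← Complex.ofReal_sin, ← Complex.ofReal_cos]
  have him : (Complex.sinh (x + y*Complex.I)).im = Real.cosh x * Real.sin y := by
    simp [Complex.sinh_add, Complex.sinh_mul_I, Complex.cosh_mul_I, ← Complex.ofReal_sinh,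
      ← Complex.ofReal_cosh, ← Complex.ofReal_sin, ← Complex.ofReal_cos]
  rw [← Real.sqrt_sq_eq_abs, Complex.norm_def, Complex.normSq_apply, hre, him]
  apply Real.sqrt_le_sqrt
  nlinarith [Real.sin_sq_add_cos_sq y, Real.cosh_sq x, sq_nonneg (Real.sin y), sq_nonneg (Real.sinh x)]

lemma cosh_norm_upper (x y : ℝ) : ‖Complex.cosh (x + y*Complex.I)‖ ≤ Real.cosh x := by
  have hre : (Complex.cosh (x + y*Complex.I)).re = Real.cosh x * Real.cos y := by
    simp [Complex.cosh_add, Complex.sinh_mul_I, Complex.cosh_mul_I, ← Complex.ofReal_sinh,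
      ← Complex.ofReal_cosh, ← Complex.ofReal_sin, ← Complex.ofReal_cos]
  have him : (Complex.cosh (x + y*Complex.I)).im = Real.sinh x * Real.sin y := by
    simp [Complex.cosh_add, Complex.sinh_mul_I, Complex.cosh_mul_I, ← Complex.ofReal_sinh,
      ← Complex.ofReal_cosh, ← Complex.ofReal_sin, ← Complex.ofReal_cos]
  have h2 : ‖Complex.cosh (x + y*Complex.I)‖ ≤ Real.sqrt ((Real.cosh x)^2) := by
    rw [Complex.norm_def, Complex.normSq_apply, hre, him]
    apply Real.sqrt_le_sqrt
    nlinarith [Real.sin_sq_add_cos_sq y, Real.cosh_sq x, sq_nonneg (Real.sin y), sq_nonneg (Real.sinh x)]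
  simpa [Real.sqrt_sq (Real.cosh_pos x).le] using h2

/-- coefficient for linear-in-|y| growth coming from the coth factor -/
def Pc (t x₀ x₁ B₀ : ℝ) : ℝ := B₀ * Real.cosh (2*t*x₁) / Real.sinh (2*t*x₀)

def Lc (n : ℕ) (t x₀ x₁ B₀ : ℝ) : ℝ := n + Pc t x₀ x₁ B₀

def Kc (n : ℕ) (t x₀ x₁ A₀ B₀ : ℝ) : ℝ :=
  (4:ℝ)^n * ((4*Real.pi)^n)⁻¹ *
    Real.exp (2*t*x₁^2 + x₁*A₀ + n*x₁ + Pc t x₀ x₁ B₀ * x₁) / (Real.sinh (2*t*x₀))^n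

/-- the integrand as a function of `μ` -/
def gfun (n : ℕ) (t A B η : ℝ) (μ : ℂ) : ℂ :=
  Complex.exp (2*(t:ℂ)*μ^2) * Complex.exp (-2*(η:ℂ)*μ) *
  ((4:ℂ)^n * Complex.exp (μ * (A:ℂ)) * (((4*Real.pi)^n)⁻¹ : ℝ) *
    (μ / Complex.sinh (2*(t:ℂ)*μ))^n *
    Complex.exp (-(μ * (Complex.cosh (2*(t:ℂ)*μ) / Complex.sinh (2*(t:ℂ)*μ))) * (B:ℂ)))

lemma gfun_norm_bound (n : ℕ) (t x₀ x₁ A B A₀ B₀ η : ℝ) (ht : 0 < t) (hx₀ : 0 < x₀)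
    (hA : |A| ≤ A₀) (hB0 : 0 ≤ B) (hB : B ≤ B₀) (μ : ℂ)
    (h1 : x₀ ≤ μ.re) (h2 : μ.re ≤ x₁) :
    ‖gfun n t A B η μ‖ ≤
      Real.exp (-(2*η)*μ.re) * Kc n t x₀ x₁ A₀ B₀ *
        Real.exp (-(2*t)*μ.im^2 + Lc n t x₀ x₁ B₀ * |μ.im|) := by
  set x := μ.re with hx
  set y := μ.im with hy
  have hxpos : 0 < x := lt_of_lt_of_le hx₀ h1
  have hSpos : 0 < Real.sinh (2*t*x₀) := Real.sinh_pos_iff.2 (by positivity)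
  have hmu : 2*(t:ℂ)*μ = ((2*t*x : ℝ) : ℂ) + ((2*t*y : ℝ) : ℂ)*Complex.I := by
    apply Complex.ext <;> simp [Complex.mul_re, Complex.mul_im, hx, hy] <;> ring
  have hSle : Real.sinh (2*t*x₀) ≤ ‖Complex.sinh (2*(t:ℂ)*μ)‖ := by
    rw [hmu]
    refine le_trans ?_ (sinh_norm_lower (2*t*x) (2*t*y))
    rw [_root_.abs_of_nonneg (Real.sinh_nonneg_iff.2 (by positivity))]
    exact Real.sinh_le_sinh.2 (by nlinarith)
  have hCle : ‖Complex.cosh (2*(t:ℂ)*μ)‖ ≤ Real.cosh (2*t*x₁) := by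
    rw [hmu]
    refine le_trans (cosh_norm_upper (2*t*x) (2*t*y)) ?_
    rw [Real.cosh_le_cosh, _root_.abs_of_nonneg (by nlinarith : (0:ℝ) ≤ 2*t*x),
      _root_.abs_of_nonneg (by nlinarith : (0:ℝ) ≤ 2*t*x₁)]
    nlinarith [mul_nonneg ht.le (sub_nonneg.2 h2)]
  have hx1pos : (0:ℝ) < x₁ := lt_of_lt_of_le hxpos h2
  have hyabs : (0:ℝ) ≤ x₁ + |y| := by positivity
  have hmuabs : ‖μ‖ ≤ x₁ + |y| := by
    refine le_trans (Complex.norm_le_abs_re_add_abs_im μ) ?_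
    rw [← hx, ← hy, abs_of_pos hxpos]
    gcongr
  have hP : 0 ≤ Pc t x₀ x₁ B₀ := by
    have : 0 ≤ B₀ := le_trans hB0 hB
    have := Real.cosh_pos (x := 2*t*x₁)
    unfold Pc; positivity
  -- bounds for each factor
  have F1 : ‖Complex.exp (2*(t:ℂ)*μ^2)‖ ≤ Real.exp (2*t*x₁^2 + -(2*t)*y^2) := by
    rw [Complex.norm_exp]
    apply Real.exp_le_exp.2
    have hre : (2*(t:ℂ)*μ^2).re = 2*t*(x*x - y*y) := by
      rw [show 2*(t:ℂ)*μ^2 = ((2*t:ℝ):ℂ)*(μ*μ) by push_cast; ring, Complex.re_ofReal_mul,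
        Complex.mul_re, ← hx, ← hy]
    rw [hre]
    have hsq : x*x ≤ x₁*x₁ := by nlinarith
    nlinarith [mul_nonneg ht.le (sub_nonneg.2 hsq)]
  have F2 : ‖Complex.exp (-2*(η:ℂ)*μ)‖ = Real.exp (-(2*η)*x) := by
    rw [Complex.norm_exp,
      show -2*(η:ℂ)*μ = ((-(2*η):ℝ):ℂ)*μ by push_cast; ring, Complex.re_ofReal_mul, ← hx]
  have F4 : ‖Complex.exp (μ * (A:ℂ))‖ ≤ Real.exp (x₁*A₀) := by
    rw [Complex.norm_exp]
    apply Real.exp_le_exp.2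
    have hre : (μ * (A:ℂ)).re = x*A := by
      rw [show μ * (A:ℂ) = ((A:ℝ):ℂ)*μ by ring, Complex.re_ofReal_mul, ← hx]; ring
    rw [hre]
    calc x*A ≤ |x*A| := le_abs_self _
      _ = |x| * |A| := abs_mul _ _
      _ ≤ x₁*A₀ := by
          rw [_root_.abs_of_pos hxpos]
          exact mul_le_mul h2 hA (abs_nonneg A) hx1pos.le
  have F6 : ‖(μ / Complex.sinh (2*(t:ℂ)*μ))^n‖ ≤
      Real.exp ((n:ℝ)*x₁ + (n:ℝ) * |y|) / (Real.sinh (2*t*x₀))^n := by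
    rw [norm_pow, norm_div]
    calc (‖μ‖ / ‖Complex.sinh (2*(t:ℂ)*μ)‖)^n
        ≤ ((x₁ + |y|) / Real.sinh (2*t*x₀))^n :=
          pow_le_pow_left₀ (by positivity) (div_le_div₀ hyabs hmuabs hSpos hSle) n
      _ = (x₁ + |y|)^n / (Real.sinh (2*t*x₀))^n := div_pow _ _ _
      _ ≤ (Real.exp (x₁ + |y|))^n / (Real.sinh (2*t*x₀))^n := by
          gcongr
          have := Real.add_one_le_exp (x₁ + |y|)
          linarith
      _ = Real.exp ((n:ℝ)*x₁ + (n:ℝ) * |y|) / (Real.sinh (2*t*x₀))^n := by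
          rw [← Real.exp_nat_mul]
          ring_nf
  have F7 : ‖Complex.exp (-(μ * (Complex.cosh (2*(t:ℂ)*μ) / Complex.sinh (2*(t:ℂ)*μ))) * (B:ℂ))‖
      ≤ Real.exp (Pc t x₀ x₁ B₀ * x₁ + Pc t x₀ x₁ B₀ * |y|) := by
    rw [Complex.norm_exp]
    apply Real.exp_le_exp.2
    refine le_trans (Complex.re_le_norm _) ?_
    rw [norm_mul, norm_neg, norm_mul, norm_div, Complex.norm_real, Real.norm_eq_abs,
      _root_.abs_of_nonneg hB0]
    calc ‖μ‖ * (‖Complex.cosh (2*(t:ℂ)*μ)‖ /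
            ‖Complex.sinh (2*(t:ℂ)*μ)‖) * B
        ≤ (x₁ + |y|) * (Real.cosh (2*t*x₁) / Real.sinh (2*t*x₀)) * B₀ := by
          have hdiv : ‖Complex.cosh (2*(t:ℂ)*μ)‖ / ‖Complex.sinh (2*(t:ℂ)*μ)‖
              ≤ Real.cosh (2*t*x₁) / Real.sinh (2*t*x₀) :=
            div_le_div₀ (Real.cosh_pos _).le hCle hSpos hSle
          exact mul_le_mul (mul_le_mul hmuabs hdiv
              (div_nonneg (norm_nonneg _) (norm_nonneg _)) hyabs) hB hB0
            (mul_nonneg hyabs (div_nonneg (Real.cosh_pos _).le hSpos.le))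
      _ = Pc t x₀ x₁ B₀ * x₁ + Pc t x₀ x₁ B₀ * |y| := by unfold Pc; ring
  have F3 : ‖(4:ℂ)^n‖ = (4:ℝ)^n := by
    rw [norm_pow]; norm_num
  have F5 : ‖((((4*Real.pi)^n)⁻¹ : ℝ) : ℂ)‖ = ((4*Real.pi)^n)⁻¹ := by
    rw [Complex.norm_real, Real.norm_eq_abs]
    exact _root_.abs_of_nonneg (by positivity)
  calc ‖gfun n t A B η μ‖
      = ‖Complex.exp (2*(t:ℂ)*μ^2)‖ * ‖Complex.exp (-2*(η:ℂ)*μ)‖ *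
        (‖(4:ℂ)^n‖ * ‖Complex.exp (μ * (A:ℂ))‖ * ‖((((4*Real.pi)^n)⁻¹ : ℝ) : ℂ)‖ *
          ‖(μ / Complex.sinh (2*(t:ℂ)*μ))^n‖ *
          ‖Complex.exp (-(μ * (Complex.cosh (2*(t:ℂ)*μ) / Complex.sinh (2*(t:ℂ)*μ))) * (B:ℂ))‖) := by
        simp [gfun, norm_mul]
    _ ≤ Real.exp (2*t*x₁^2 + -(2*t)*y^2) * Real.exp (-(2*η)*x) *
        ((4:ℝ)^n * Real.exp (x₁*A₀) * ((4*Real.pi)^n)⁻¹ *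
          (Real.exp ((n:ℝ)*x₁ + (n:ℝ) * |y|) / (Real.sinh (2*t*x₀))^n) *
          Real.exp (Pc t x₀ x₁ B₀ * x₁ + Pc t x₀ x₁ B₀ * |y|)) := by
        rw [F2, F3, F5]
        gcongr
    _ = Real.exp (-(2*η)*x) * Kc n t x₀ x₁ A₀ B₀ *
        Real.exp (-(2*t)*y^2 + Lc n t x₀ x₁ B₀ * |y|) := by
        simp only [Kc, Lc, Real.exp_add, add_mul]
        ring

lemma integrable_exp_neg_mul_abs (b : ℝ) (hb : 0 < b) :
    Integrable (fun x : ℝ => Real.exp (-b * |x|)) := by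
  have hcont : Continuous fun x : ℝ => Real.exp (-b * |x|) := by fun_prop
  have h1 : IntegrableOn (fun x : ℝ => Real.exp (-b * |x|)) (Set.Ici 0) := by
    refine ((integrableOn_Ici_iff_integrableOn_Ioi (by simp)).2 (exp_neg_integrableOn_Ioi 0 hb)).congr_fun
      (fun x hx => ?_) measurableSet_Ici
    rw [_root_.abs_of_nonneg hx]
  have hmap : volume.restrict (Set.Iic (0:ℝ)) = (volume.restrict (Set.Ici (0:ℝ))).map Neg.neg := by
    have := Measure.restrict_map (measurable_neg : Measurable fun x : ℝ => -x) (measurableSet_Iic (a := (0:ℝ)))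
      (μ := (volume : Measure ℝ))
    have hns : (volume : Measure ℝ).map Neg.neg = volume := Measure.neg_eq_self _
    rw [hns] at this
    rw [this]
    congr 1
    simp
  have h2 : IntegrableOn (fun x : ℝ => Real.exp (-b * |x|)) (Set.Iic 0) := by
    unfold IntegrableOn
    rw [hmap, integrable_map_measure hcont.aestronglyMeasurable measurable_neg.aemeasurable]
    refine h1.congr_fun (fun x hx => ?_) measurableSet_Ici
    simp [Function.comp, abs_neg]
  have : IntegrableOn (fun x : ℝ => Real.exp (-b * |x|)) (Set.Iic 0 ∪ Set.Ici 0) := h2.union h1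
  rwa [Set.Iic_union_Ici, MeasureTheory.integrableOn_univ] at this


lemma integrable_gauss_lin (c K L : ℝ) (hc : 0 < c) :
    Integrable (fun y : ℝ => K * Real.exp (-c * y ^ 2 + L * |y|)) := by
  have hdom : Integrable (fun y : ℝ =>
      (|K| * Real.exp (L ^ 2 / (2 * c))) * Real.exp (-(c / 2) * y ^ 2)) :=
    (integrable_exp_neg_mul_sq (by linarith)).const_mul _
  have hmeas : Continuous fun y : ℝ => K * Real.exp (-c * y ^ 2 + L * |y|) := by
    apply continuous_const.mul
    exact Real.continuous_exp.comp (by continuity)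
  refine hdom.mono' hmeas.aestronglyMeasurable (Filter.Eventually.of_forall fun y => ?_)
  rw [Real.norm_eq_abs, abs_mul, _root_.abs_of_pos (Real.exp_pos _)]
  have key : -c * y ^ 2 + L * |y| ≤ L ^ 2 / (2 * c) + -(c / 2) * y ^ 2 := by
    rw [← _root_.sq_abs y, ← sub_nonneg]
    have h : L ^ 2 / (2 * c) + -(c / 2) * |y| ^ 2 - (-c * |y| ^ 2 + L * |y|)
        = (c * |y| - L) ^ 2 / (2 * c) := by
      field_simp; ring_nf
    rw [h]; positivity
  calc |K| * Real.exp (-c * y ^ 2 + L * |y|)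
      ≤ |K| * Real.exp (L ^ 2 / (2 * c) + -(c / 2) * y ^ 2) :=
        mul_le_mul_of_nonneg_left (Real.exp_le_exp.2 key) (abs_nonneg K)
    _ = |K| * Real.exp (L ^ 2 / (2 * c)) * Real.exp (-(c / 2) * y ^ 2) := by
        rw [Real.exp_add, mul_assoc]

lemma contour_shift (F : ℂ → ℂ) (x₀ x₁ c K L : ℝ) (hx₀ : 0 < x₀) (hx : x₀ ≤ x₁) (hc : 0 < c)
    (hd : ∀ μ : ℂ, 0 < μ.re → DifferentiableAt ℂ F μ)
    (hb : ∀ μ : ℂ, x₀ ≤ μ.re → μ.re ≤ x₁ → ‖F μ‖ ≤ K * Real.exp (-c * μ.im ^ 2 + L * |μ.im|)) :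
    ∫ y : ℝ, F (x₀ + y * I) = ∫ y : ℝ, F (x₁ + y * I) := by
  -- integrability on vertical lines
  have hline : ∀ lam : ℝ, x₀ ≤ lam → lam ≤ x₁ → Integrable (fun y : ℝ => F (lam + y * I)) := by
    intro lam h1 h2
    have hcont : Continuous fun y : ℝ => F (lam + y * I) := by
      rw [continuous_iff_continuousAt]
      intro y
      have h : (0:ℝ) < ((lam : ℂ) + y * I).re := by simp; linarith
      exact ContinuousAt.comp (hd _ h).continuousAt
        (Continuous.continuousAt (by fun_prop : Continuous fun s : ℝ => (lam : ℂ) + s * I))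
    refine (integrable_gauss_lin c K L hc).mono' hcont.aestronglyMeasurable
      (Filter.Eventually.of_forall fun y => ?_)
    have := hb ((lam : ℂ) + y * I) (by simp [h1]) (by simp [h2])
    simpa using this
  have hI0 := hline x₀ le_rfl hx
  have hI1 := hline x₁ hx le_rfl
  -- horizontal side integrals
  set H : ℝ → ℂ := fun T => (∫ x : ℝ in x₀..x₁, F (x + T * I)) with hH
  have hHbound : ∀ T : ℝ, ‖H T‖ ≤ K * Real.exp (-c * T ^ 2 + L * |T|) * |x₁ - x₀| := by
    intro T
    apply intervalIntegral.norm_integral_le_of_norm_le_const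
    intro x hxm
    have hxm' : x ∈ Set.Icc x₀ x₁ := by
      rw [Set.uIoc_of_le hx] at hxm; exact ⟨hxm.1.le, hxm.2⟩
    have := hb ((x : ℂ) + T * I) (by simp [hxm'.1]) (by simp [hxm'.2])
    simpa using this
  have hHtend : Tendsto (fun T : ℝ => ‖H T‖ + ‖H (-T)‖) atTop (𝓝 0) := by
    have hexp : Tendsto (fun T : ℝ => K * Real.exp (-c * T ^ 2 + L * T) * |x₁ - x₀|)
        atTop (𝓝 0) := by
      rw [show (0:ℝ) = K * 0 * |x₁ - x₀| by ring]
      refine Tendsto.mul_const _ (Tendsto.const_mul _ ?_)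
      refine Real.tendsto_exp_atBot.comp ?_
      have h1 : Tendsto (fun T : ℝ => T * (c * T - L)) atTop atTop :=
        Tendsto.atTop_mul_atTop₀ tendsto_id
          (tendsto_atTop_add_const_right _ _ ((tendsto_const_mul_atTop_of_pos hc).mpr tendsto_id))
      have : (fun T : ℝ => -c * T ^ 2 + L * T) = fun T => -(T * (c * T - L)) := by
        funext T; ring
      rw [this]
      exact tendsto_neg_atTop_atBot.comp h1
    have hub : ∀ᶠ T : ℝ in atTop, ‖H T‖ + ‖H (-T)‖ ≤
        2 * (K * Real.exp (-c * T ^ 2 + L * T) * |x₁ - x₀|) := by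
      filter_upwards [eventually_ge_atTop (0:ℝ)] with T hT
      have h1 := hHbound T
      have h2 := hHbound (-T)
      rw [_root_.abs_of_nonneg hT] at h1
      rw [neg_sq, abs_neg, _root_.abs_of_nonneg hT] at h2
      linarith
    have h2exp : Tendsto (fun T : ℝ => 2 * (K * Real.exp (-c * T ^ 2 + L * T) * |x₁ - x₀|))
        atTop (𝓝 0) := by
      simpa using hexp.const_mul 2
    refine tendsto_of_tendsto_of_tendsto_of_le_of_le' tendsto_const_nhds h2exp ?_ hub
    exact Filter.Eventually.of_forall fun T => by positivity
  -- rectangle identity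
  have hrect : ∀ T : ℝ, (∫ y : ℝ in (-T)..T, F (x₁ + y * I)) - ∫ y : ℝ in (-T)..T, F (x₀ + y * I)
      = I * (H (-T) - H T) := by
    intro T
    have hdiff : DifferentiableOn ℂ F (Set.uIcc ((x₀ : ℂ) - T * I).re ((x₁ : ℂ) + T * I).re ×ℂ
        Set.uIcc ((x₀ : ℂ) - T * I).im ((x₁ : ℂ) + T * I).im) := by
      intro μ hμ
      rw [Complex.mem_reProdIm] at hμ
      have h1 : μ.re ∈ Set.uIcc x₀ x₁ := by simpa using hμ.1
      rw [Set.uIcc_of_le hx] at h1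
      exact (hd μ (lt_of_lt_of_le hx₀ h1.1)).differentiableWithinAt
    have := Complex.integral_boundary_rect_eq_zero_of_differentiableOn F
      ((x₀ : ℂ) - T * I) ((x₁ : ℂ) + T * I) hdiff
    simp only [Complex.add_re, Complex.sub_re, Complex.ofReal_re, Complex.mul_re, Complex.I_re,
      Complex.ofReal_im, Complex.I_im, Complex.add_im, Complex.sub_im, Complex.mul_im,
      smul_eq_mul] at this
    norm_num at this
    simp only [hH, Complex.ofReal_neg, neg_mul]
    linear_combination (-I) * this +
      ((∫ y : ℝ in (-T)..T, F ((x₁ : ℂ) + y * I)) -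
        ∫ y : ℝ in (-T)..T, F ((x₀ : ℂ) + y * I)) * Complex.I_mul_I
  -- take limits
  have hTend0 : Tendsto (fun T : ℝ => ∫ y : ℝ in (-T)..T, F (x₀ + y * I)) atTop
      (𝓝 (∫ y : ℝ, F (x₀ + y * I))) :=
    intervalIntegral_tendsto_integral hI0 tendsto_neg_atTop_atBot tendsto_id
  have hTend1 : Tendsto (fun T : ℝ => ∫ y : ℝ in (-T)..T, F (x₁ + y * I)) atTop
      (𝓝 (∫ y : ℝ, F (x₁ + y * I))) :=
    intervalIntegral_tendsto_integral hI1 tendsto_neg_atTop_atBot tendsto_id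
  have hdiff_tend : Tendsto (fun T : ℝ => (∫ y : ℝ in (-T)..T, F (x₁ + y * I)) -
      ∫ y : ℝ in (-T)..T, F (x₀ + y * I)) atTop
      (𝓝 ((∫ y : ℝ, F (x₁ + y * I)) - ∫ y : ℝ, F (x₀ + y * I))) := hTend1.sub hTend0
  have hzero : Tendsto (fun T : ℝ => (∫ y : ℝ in (-T)..T, F (x₁ + y * I)) -
      ∫ y : ℝ in (-T)..T, F (x₀ + y * I)) atTop (𝓝 0) := by
    rw [tendsto_zero_iff_norm_tendsto_zero]
    refine tendsto_of_tendsto_of_tendsto_of_le_of_le' tendsto_const_nhds hHtend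
      (Filter.Eventually.of_forall fun T => norm_nonneg _)
      (Filter.Eventually.of_forall fun T => ?_)
    rw [hrect T, norm_mul]
    simp only [Complex.norm_I, one_mul]
    exact (norm_sub_le _ _).trans (by linarith [norm_nonneg (H (-T)), norm_nonneg (H T)])
  have := tendsto_nhds_unique hdiff_tend hzero
  rw [sub_eq_zero] at this
  exact this.symm

lemma sinh_2t_ne_zero (t : ℝ) (ht : 0 < t) (μ : ℂ) (h : 0 < μ.re) :
    Complex.sinh (2*(t:ℂ)*μ) ≠ 0 := by
  have hmu : 2*(t:ℂ)*μ = ((2*t*μ.re : ℝ):ℂ) + ((2*t*μ.im : ℝ):ℂ)*Complex.I := by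
    apply Complex.ext <;> simp [Complex.mul_re, Complex.mul_im] <;> ring
  intro h0
  have h1 := sinh_norm_lower (2*t*μ.re) (2*t*μ.im)
  rw [← hmu, h0] at h1
  simp only [map_zero, norm_zero] at h1
  have h2 : 0 < Real.sinh (2*t*μ.re) := Real.sinh_pos_iff.2 (by positivity)
  rw [_root_.abs_of_pos h2] at h1
  linarith

lemma gfun_diff (n : ℕ) (t A B η : ℝ) (ht : 0 < t) (μ : ℂ) (h : 0 < μ.re) :
    DifferentiableAt ℂ (gfun n t A B η) μ := by
  have hne : Complex.sinh (2*(t:ℂ)*μ) ≠ 0 := sinh_2t_ne_zero t ht μ h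
  have hlin : DifferentiableAt ℂ (fun μ : ℂ => 2*(t:ℂ)*μ) μ := by fun_prop
  have hsinh : DifferentiableAt ℂ (fun μ : ℂ => Complex.sinh (2*(t:ℂ)*μ)) μ :=
    (Complex.differentiable_sinh _).comp μ hlin
  have hcosh : DifferentiableAt ℂ (fun μ : ℂ => Complex.cosh (2*(t:ℂ)*μ)) μ :=
    (Complex.differentiable_cosh _).comp μ hlin
  have h1 : DifferentiableAt ℂ (fun μ : ℂ => Complex.exp (2*(t:ℂ)*μ^2)) μ :=
    DifferentiableAt.cexp (by fun_prop)
  have h2 : DifferentiableAt ℂ (fun μ : ℂ => Complex.exp (-2*(η:ℂ)*μ)) μ :=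
    DifferentiableAt.cexp (by fun_prop)
  have h4 : DifferentiableAt ℂ (fun μ : ℂ => Complex.exp (μ * (A:ℂ))) μ :=
    DifferentiableAt.cexp (by fun_prop)
  have h6 : DifferentiableAt ℂ (fun μ : ℂ => (μ / Complex.sinh (2*(t:ℂ)*μ))^n) μ :=
    (differentiableAt_id.div hsinh hne).pow n
  have h7 : DifferentiableAt ℂ (fun μ : ℂ =>
      Complex.exp (-(μ * (Complex.cosh (2*(t:ℂ)*μ) / Complex.sinh (2*(t:ℂ)*μ))) * (B:ℂ))) μ :=
    DifferentiableAt.cexp (((differentiableAt_id.mul (hcosh.div hsinh hne)).neg).mul_const _)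
  exact (h1.mul h2).mul
    (((((differentiableAt_const _).mul h4).mul (differentiableAt_const _)).mul h6).mul h7)

lemma Kc_nonneg (n : ℕ) (t x₀ x₁ A₀ B₀ : ℝ) (ht : 0 < t) (hx₀ : 0 < x₀) :
    0 ≤ Kc n t x₀ x₁ A₀ B₀ := by
  have hS : 0 < Real.sinh (2*t*x₀) := Real.sinh_pos_iff.2 (by positivity)
  unfold Kc
  apply div_nonneg (by positivity) (pow_nonneg hS.le n)

lemma line_bound (n : ℕ) (t A B A₀ B₀ η lam : ℝ) (ht : 0 < t) (hlam : 0 < lam)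
    (hA : |A| ≤ A₀) (hB0 : 0 ≤ B) (hB : B ≤ B₀) :
    ‖∫ y : ℝ, gfun n t A B η ((lam:ℂ) + y*Complex.I)‖ ≤
      Real.exp (-(2*η)*lam) * (Kc n t lam lam A₀ B₀ *
        ∫ y : ℝ, Real.exp (-(2*t)*y^2 + Lc n t lam lam B₀ * |y|)) := by
  calc ‖∫ y : ℝ, gfun n t A B η ((lam:ℂ) + y*Complex.I)‖
      ≤ ∫ y : ℝ, ‖gfun n t A B η ((lam:ℂ) + y*Complex.I)‖ :=
        norm_integral_le_integral_norm _
    _ ≤ ∫ y : ℝ, (Real.exp (-(2*η)*lam) * Kc n t lam lam A₀ B₀) *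
          Real.exp (-(2*t)*y^2 + Lc n t lam lam B₀ * |y|) := by
        refine integral_mono_of_nonneg (Filter.Eventually.of_forall fun y => norm_nonneg _)
          (integrable_gauss_lin (2*t) _ _ (by linarith))
          (Filter.Eventually.of_forall fun y => ?_)
        have h := gfun_norm_bound n t lam lam A B A₀ B₀ η ht hlam hA hB0 hB
          ((lam:ℂ) + y*Complex.I) (by simp) (by simp)
        simpa [mul_assoc] using h
    _ = Real.exp (-(2*η)*lam) * (Kc n t lam lam A₀ B₀ *
          ∫ y : ℝ, Real.exp (-(2*t)*y^2 + Lc n t lam lam B₀ * |y|)) := by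
        rw [integral_const_mul, mul_assoc]

lemma wplus_gfun (n : ℕ) (t : ℝ) (z w : Fin n → ℂ) (ζ : ℂ) :
    Wplus n t z w ζ = ((2*Real.pi)⁻¹:ℝ) * ∫ s : ℝ, gfun n t
      ((∑ j, (w j).re * (z j).im) - ∑ j, (w j).im * (z j).re)
      ((∑ j, (z j).im ^ 2) + ∑ j, (w j).im ^ 2) ζ.im ((1:ℂ) + Complex.I*(s:ℂ)/2) := rfl

set_option maxHeartbeats 1600000 in
/-- For `a ≥ 1` and `Q ⊆ ℂ^{2n}` compact there is a constant `C > 0` such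
that for all `ε ∈ [a⁻¹, a]`, `ξ ∈ ℝ` and `(z,w) ∈ Q`:
`∫_ℝ |e^{2εη} W_t^+(z,w,ξ+iη)| dη ≤ C`. -/
theorem partial_weight_uniform_bound
    (n : ℕ) (hn : 1 ≤ n) (t : ℝ) (ht : 0 < t) (a : ℝ) (ha : 1 ≤ a)
    (Q : Set ((Fin n → ℂ) × (Fin n → ℂ))) (hQ : IsCompact Q) :
    ∃ C : ℝ, 0 < C ∧ ∀ ε ∈ Set.Icc a⁻¹ a, ∀ ξ : ℝ, ∀ q ∈ Q,
      (∫ η : ℝ, ‖((Real.exp (2 * ε * η) : ℝ) : ℂ) *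
          Wplus n t q.1 q.2 ((ξ : ℂ) + (η : ℂ) * Complex.I)‖) ≤ C := by
  have ha0 : (0:ℝ) < a := lt_of_lt_of_le one_pos ha
  have hinv1 : a⁻¹ ≤ 1 := inv_le_one_of_one_le₀ ha
  have hinv0 : (0:ℝ) < a⁻¹ := by positivity
  -- uniform bounds on A and B over Q
  have hAcont : Continuous (fun q : (Fin n → ℂ) × (Fin n → ℂ) =>
      ((∑ j, (q.2 j).re * (q.1 j).im) - ∑ j, (q.2 j).im * (q.1 j).re : ℝ)) := by
    apply Continuous.sub <;> apply continuous_finset_sum <;> intro j _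
    · exact (Complex.continuous_re.comp ((continuous_apply j).comp continuous_snd)).mul
        (Complex.continuous_im.comp ((continuous_apply j).comp continuous_fst))
    · exact (Complex.continuous_im.comp ((continuous_apply j).comp continuous_snd)).mul
        (Complex.continuous_re.comp ((continuous_apply j).comp continuous_fst))
  have hBcont : Continuous (fun q : (Fin n → ℂ) × (Fin n → ℂ) =>
      ((∑ j, (q.1 j).im ^ 2) + ∑ j, (q.2 j).im ^ 2 : ℝ)) := by
    apply Continuous.add <;> apply continuous_finset_sum <;> intro j _
    · exact (Complex.continuous_im.comp ((continuous_apply j).comp continuous_fst)).pow 2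
    · exact (Complex.continuous_im.comp ((continuous_apply j).comp continuous_snd)).pow 2
  obtain ⟨CA, hCA⟩ := hQ.exists_bound_of_continuousOn hAcont.continuousOn
  obtain ⟨CB, hCB⟩ := hQ.exists_bound_of_continuousOn hBcont.continuousOn
  set A₀ : ℝ := max CA 0 with hA₀
  set B₀ : ℝ := max CB 0 with hB₀
  set lamM : ℝ := (2*a)⁻¹ with hlamM
  set lamP : ℝ := a + 1 with hlamP
  have hlamM0 : 0 < lamM := by positivity
  have hlamM1 : lamM ≤ 1 := by
    rw [hlamM]
    refine inv_le_one_of_one_le₀ (by linarith)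
  have hlamP1 : (1:ℝ) ≤ lamP := by rw [hlamP]; linarith
  have hlamP0 : (0:ℝ) < lamP := by linarith
  set MP : ℝ := Kc n t lamP lamP A₀ B₀ *
    ∫ y : ℝ, Real.exp (-(2*t)*y^2 + Lc n t lamP lamP B₀ * |y|) with hMP
  set MM : ℝ := Kc n t lamM lamM A₀ B₀ *
    ∫ y : ℝ, Real.exp (-(2*t)*y^2 + Lc n t lamM lamM B₀ * |y|) with hMM
  set D : ℝ := (Real.pi)⁻¹ * (|MP| + |MM|) with hD
  have hD0 : 0 ≤ D := by positivity
  set V : ℝ := ∫ η : ℝ, D * Real.exp (-a⁻¹ * |η|) with hV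
  refine ⟨max V 1, lt_of_lt_of_le one_pos (le_max_right _ _), ?_⟩
  intro ε hε ξ q hq
  set A : ℝ := (∑ j, (q.2 j).re * (q.1 j).im) - ∑ j, (q.2 j).im * (q.1 j).re with hAdef
  set B : ℝ := (∑ j, (q.1 j).im ^ 2) + ∑ j, (q.2 j).im ^ 2 with hBdef
  have hA : |A| ≤ A₀ := le_trans (le_of_eq (Real.norm_eq_abs A).symm)
    ((hCA q hq).trans (le_max_left _ _))
  have hB0 : 0 ≤ B := by rw [hBdef]; positivity
  have hB : B ≤ B₀ := by
    refine le_trans (le_abs_self B) (le_trans (le_of_eq (Real.norm_eq_abs B).symm) ?_)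
    exact (hCB q hq).trans (le_max_left _ _)
  have hd : ∀ μ : ℂ, 0 < μ.re → ∀ η : ℝ, DifferentiableAt ℂ (gfun n t A B η) μ :=
    fun μ h η => gfun_diff n t A B η ht μ h
  -- pointwise bound in η
  have hpt : ∀ η : ℝ, ‖((Real.exp (2 * ε * η) : ℝ) : ℂ) *
      Wplus n t q.1 q.2 ((ξ : ℂ) + (η : ℂ) * Complex.I)‖ ≤ D * Real.exp (-a⁻¹ * |η|) := by
    intro η
    have him : (((ξ:ℂ) + (η:ℂ) * Complex.I)).im = η := by simp
    have hW : Wplus n t q.1 q.2 ((ξ:ℂ) + (η:ℂ) * Complex.I) = ((2*Real.pi)⁻¹:ℝ) *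
        ∫ s : ℝ, gfun n t A B η ((1:ℂ) + Complex.I*(s:ℂ)/2) := by
      rw [wplus_gfun, him]
    -- change of variables s = 2y
    have hGf : (fun s : ℝ => gfun n t A B η ((1:ℂ) + Complex.I*(s:ℂ)/2)) =
        (fun s : ℝ => gfun n t A B η ((((1:ℝ)):ℂ) + (((s/2 : ℝ)):ℂ)*Complex.I)) := by
      funext s; congr 1; push_cast; ring
    have hcv : (∫ s : ℝ, gfun n t A B η ((1:ℂ) + Complex.I*(s:ℂ)/2))
        = (2:ℝ) • ∫ y : ℝ, gfun n t A B η ((((1:ℝ)):ℂ) + (y:ℂ)*Complex.I) := by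
      rw [hGf]
      have h2 := MeasureTheory.Measure.integral_comp_div
        (fun y : ℝ => gfun n t A B η ((((1:ℝ)):ℂ) + (y:ℂ)*Complex.I)) 2
      rw [h2]
      norm_num
    -- strip bound producers
    have hstrip : ∀ x₀ x₁ : ℝ, 0 < x₀ → x₀ ≤ x₁ → ∀ μ : ℂ, x₀ ≤ μ.re → μ.re ≤ x₁ →
        ‖gfun n t A B η μ‖ ≤ (Real.exp (2 * |η| * x₁) * Kc n t x₀ x₁ A₀ B₀) *
          Real.exp (-(2*t)*μ.im^2 + Lc n t x₀ x₁ B₀ * |μ.im|) := by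
      intro x₀ x₁ hx₀ hx01 μ hm1 hm2
      refine le_trans (gfun_norm_bound n t x₀ x₁ A B A₀ B₀ η ht hx₀ hA hB0 hB μ hm1 hm2) ?_
      have hE : Real.exp (-(2*η)*μ.re) ≤ Real.exp (2 * |η| * x₁) := by
        apply Real.exp_le_exp.2
        have h1 : -(2*η)*μ.re ≤ |(-(2*η))*μ.re| := le_abs_self _
        rw [abs_mul, abs_neg] at h1
        refine h1.trans ?_
        have hre0 : (0:ℝ) < μ.re := lt_of_lt_of_le hx₀ hm1
        rw [_root_.abs_of_pos hre0, abs_mul]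
        have : |(2:ℝ)| = 2 := by norm_num
        rw [this]
        have h2 : (0:ℝ) ≤ 2*|η| := by positivity
        calc 2 * |η| * μ.re ≤ 2 * |η| * x₁ := mul_le_mul_of_nonneg_left hm2 h2
          _ = 2 * |η| * x₁ := rfl
      exact mul_le_mul_of_nonneg_right
        (mul_le_mul_of_nonneg_right hE (Kc_nonneg n t x₀ x₁ A₀ B₀ ht hx₀))
        (Real.exp_pos _).le
    have hshiftP : (∫ y : ℝ, gfun n t A B η ((((1:ℝ)):ℂ) + y*Complex.I))
        = ∫ y : ℝ, gfun n t A B η ((lamP:ℂ) + y*Complex.I) :=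
      contour_shift (gfun n t A B η) 1 lamP (2*t)
        (Real.exp (2 * |η| * lamP) * Kc n t 1 lamP A₀ B₀) (Lc n t 1 lamP B₀)
        one_pos hlamP1 (by linarith) (fun μ h => hd μ h η)
        (hstrip 1 lamP one_pos hlamP1)
    have hshiftM : (∫ y : ℝ, gfun n t A B η ((lamM:ℂ) + y*Complex.I))
        = ∫ y : ℝ, gfun n t A B η ((((1:ℝ)):ℂ) + y*Complex.I) :=
      contour_shift (gfun n t A B η) lamM 1 (2*t)
        (Real.exp (2 * |η| * 1) * Kc n t lamM 1 A₀ B₀) (Lc n t lamM 1 B₀)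
        hlamM0 hlamM1 (by linarith) (fun μ h => hd μ h η)
        (hstrip lamM 1 hlamM0 hlamM1)
    have hlineP := line_bound n t A B A₀ B₀ η lamP ht hlamP0 hA hB0 hB
    have hlineM := line_bound n t A B A₀ B₀ η lamM ht hlamM0 hA hB0 hB
    -- norm decomposition
    have hnorm : ‖((Real.exp (2 * ε * η) : ℝ) : ℂ) *
        Wplus n t q.1 q.2 ((ξ:ℂ) + (η:ℂ)*Complex.I)‖ =
        Real.exp (2*ε*η) * ((2*Real.pi)⁻¹ *
          (2 * ‖∫ y : ℝ, gfun n t A B η ((((1:ℝ)):ℂ) + y*Complex.I)‖)) := by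
      rw [norm_mul, hW, norm_mul, hcv, norm_smul]
      rw [Complex.norm_real, Complex.norm_real, Real.norm_eq_abs, Real.norm_eq_abs,
        Real.norm_eq_abs]
      rw [_root_.abs_of_pos (Real.exp_pos _), _root_.abs_of_nonneg (by positivity :
        (0:ℝ) ≤ (2*Real.pi)⁻¹), _root_.abs_of_nonneg (by norm_num : (0:ℝ) ≤ (2:ℝ))]
    rw [hnorm]
    rcases le_or_gt 0 η with hη | hη
    · -- use the line at lamP
      rw [hshiftP]
      have habs : |η| = η := _root_.abs_of_nonneg hη
      calc Real.exp (2*ε*η) * ((2*Real.pi)⁻¹ *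
            (2 * ‖∫ y : ℝ, gfun n t A B η ((lamP:ℂ) + y*Complex.I)‖))
          ≤ Real.exp (2*ε*η) * ((2*Real.pi)⁻¹ *
            (2 * (Real.exp (-(2*η)*lamP) * MP))) := by
            refine mul_le_mul_of_nonneg_left (mul_le_mul_of_nonneg_left
              (mul_le_mul_of_nonneg_left hlineP (by norm_num)) (by positivity))
              (Real.exp_pos _).le
        _ = (Real.pi⁻¹ * MP) * Real.exp (2*ε*η + -(2*η)*lamP) := by
            rw [Real.exp_add, mul_inv]; ring
        _ ≤ (Real.pi⁻¹ * |MP|) * Real.exp (-a⁻¹ * |η|) := by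
            refine mul_le_mul (mul_le_mul_of_nonneg_left (le_abs_self MP)
              (by positivity)) ?_ (Real.exp_pos _).le (by positivity)
            apply Real.exp_le_exp.2
            rw [habs, hlamP]
            nlinarith [mul_nonneg hη (sub_nonneg.2 hε.2),
              mul_nonneg hη (sub_nonneg.2 hinv1), hη]
        _ ≤ D * Real.exp (-a⁻¹ * |η|) := by
            refine mul_le_mul_of_nonneg_right ?_ (Real.exp_pos _).le
            rw [hD]
            nlinarith [abs_nonneg MM, Real.pi_pos, abs_nonneg MP,
              mul_nonneg (inv_nonneg.2 Real.pi_pos.le) (abs_nonneg MM)]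
    · -- use the line at lamM
      rw [← hshiftM]
      have habs : |η| = -η := abs_of_neg hη
      have hlam_eq : 2*lamM = a⁻¹ := by
        rw [hlamM, mul_inv]; field_simp
      calc Real.exp (2*ε*η) * ((2*Real.pi)⁻¹ *
            (2 * ‖∫ y : ℝ, gfun n t A B η ((lamM:ℂ) + y*Complex.I)‖))
          ≤ Real.exp (2*ε*η) * ((2*Real.pi)⁻¹ *
            (2 * (Real.exp (-(2*η)*lamM) * MM))) := by
            refine mul_le_mul_of_nonneg_left (mul_le_mul_of_nonneg_left
              (mul_le_mul_of_nonneg_left hlineM (by norm_num)) (by positivity))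
              (Real.exp_pos _).le
        _ = (Real.pi⁻¹ * MM) * Real.exp (2*ε*η + -(2*η)*lamM) := by
            rw [Real.exp_add, mul_inv]; ring
        _ ≤ (Real.pi⁻¹ * |MM|) * Real.exp (-a⁻¹ * |η|) := by
            refine mul_le_mul (mul_le_mul_of_nonneg_left (le_abs_self MM)
              (by positivity)) ?_ (Real.exp_pos _).le (by positivity)
            apply Real.exp_le_exp.2
            rw [habs]
            nlinarith [mul_nonneg (neg_nonneg.2 hη.le) (sub_nonneg.2 hε.1), hlam_eq]
        _ ≤ D * Real.exp (-a⁻¹ * |η|) := by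
            refine mul_le_mul_of_nonneg_right ?_ (Real.exp_pos _).le
            rw [hD]
            nlinarith [abs_nonneg MM, Real.pi_pos, abs_nonneg MP,
              mul_nonneg (inv_nonneg.2 Real.pi_pos.le) (abs_nonneg MP)]
  -- conclude
  have hint : Integrable (fun η : ℝ => D * Real.exp (-a⁻¹ * |η|)) :=
    (integrable_exp_neg_mul_abs a⁻¹ hinv0).const_mul D
  calc (∫ η : ℝ, ‖((Real.exp (2 * ε * η) : ℝ) : ℂ) *
        Wplus n t q.1 q.2 ((ξ : ℂ) + (η : ℂ) * Complex.I)‖)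
      ≤ ∫ η : ℝ, D * Real.exp (-a⁻¹ * |η|) :=
        integral_mono_of_nonneg (Filter.Eventually.of_forall fun η => norm_nonneg _)
          hint (Filter.Eventually.of_forall hpt)
    _ = V := rfl
    _ ≤ max V 1 := le_max_left _ _
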